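/- arXiv:1106.5198 — 7 statements merged into one kernel-verified Lean document; each statement's English description precedes it below -/
import Mathlib

section
/- Let S be an inverse semigroup, let H and K be closed inverse subsemigroups of S, and let s ∈ S. Then {s·h·inv(s) : h ∈ H} ⊆ K and {inv(s)·k·s : k ∈ K} ⊆ H hold simultaneously if and only if ({s·h·inv(s) : h ∈ H})↑ = K and ({inv(s)·k·s : k ∈ K})↑ = H. -/
namespace InvSgpPaper

/-- `inv` makes the semigroup `S` an inverse semigroup: `a * inv a * a = a`,
`inv a * a * inv a = inv a`, and all idempotents commute. -/
structure IsInvSgp (S : Type*) [Semigroup S] (inv : S → S) : Prop where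
  mul_inv_mul : ∀ a : S, a * inv a * a = a
  inv_mul_inv : ∀ a : S, inv a * a * inv a = inv a
  idem_comm : ∀ e f : S, e * e = e → f * f = f → e * f = f * e

section Defs

variable {S X Y : Type*} [Semigroup S]

/-- The natural partial order on an inverse semigroup:
`a ≤ b` iff `a = e * b` for some idempotent `e`. -/
def nle (a b : S) : Prop := ∃ e : S, e * e = e ∧ a = e * b

/-- The upward closure `A↑` of a subset `A`. -/
def up (A : Set S) : Set S := {s : S | ∃ a ∈ A, nle a s}

/-- A closed inverse subsemigroup: closed under multiplication, under `inv`,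
and upward closed (`H = H↑`). -/
def IsClosedInvSub (inv : S → S) (H : Set S) : Prop :=
  (∀ a ∈ H, ∀ b ∈ H, a * b ∈ H) ∧ (∀ a ∈ H, inv a ∈ H) ∧ up H = H

/-- The left coset `(sH)↑ = {x | s * h ≤ x for some h ∈ H}`. -/
def lcoset (s : S) (H : Set S) : Set S := {x : S | ∃ h ∈ H, nle (s * h) x}

/-- The set of idempotents of a subset `A`. -/
def idemSet (A : Set S) : Set S := {e ∈ A | e * e = e}

/-- A filter in `E(S)`: a nonempty set of idempotents closed under
multiplication and upward closed within `E(S)`. -/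
def IsFilterE (F : Set S) : Prop :=
  F.Nonempty ∧ (∀ e ∈ F, e * e = e) ∧ (∀ e ∈ F, ∀ f ∈ F, e * f ∈ F) ∧
    (∀ e ∈ F, ∀ f : S, f * f = f → nle e f → f ∈ F)

/-- `F̄ = {s ∈ S : ∀ f ∈ F, inv s * f * s ∈ F ∧ s * f * inv s ∈ F}`. -/
def fbar (inv : S → S) (F : Set S) : Set S :=
  {s : S | ∀ f ∈ F, inv s * f * s ∈ F ∧ s * f * inv s ∈ F}

/-- The minimum group congruence `σ`: `a σ b` iff some `c` satisfies `c ≤ a` and `c ≤ b`. -/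
def sigmaRel (a b : S) : Prop := ∃ c : S, nle c a ∧ nle c b

/-- The elementwise product of two subsets. -/
def setMul (A B : Set S) : Set S := {x : S | ∃ a ∈ A, ∃ b ∈ B, x = a * b}

/-- The elementwise inverse `A⁻¹` of a subset. -/
def setInv (inv : S → S) (A : Set S) : Set S := inv '' A

/-- An atlas: a subset `A` with `A·A⁻¹·A = A`. -/
def IsAtlas (inv : S → S) (A : Set S) : Prop := setMul (setMul A (setInv inv A)) A = A

/-- A (down-)directed subset: nonempty, and any two elements have a common
lower bound inside it. -/
def IsDirectedSet (A : Set S) : Prop :=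
  A.Nonempty ∧ ∀ a ∈ A, ∀ b ∈ A, ∃ c ∈ A, nle c a ∧ nle c b

/-- An action of `S` on `X` by partial maps, axioms (A1) and (A2). -/
def IsAction (act : S → X → Option X) : Prop :=
  (∀ e : S, e * e = e → ∀ x y : X, act e x = some y → y = x) ∧
    (∀ (s t : S) (x : X), act (s * t) x = (act t x).bind (act s))

/-- Transitivity of an action. -/
def IsTransitiveAct (act : S → X → Option X) : Prop :=
  ∀ x y : X, ∃ s : S, act s x = some y

/-- Effectiveness of an action: every point is in the domain of some element. -/
def IsEffectiveAct (act : S → X → Option X) : Prop :=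
  ∀ x : X, ∃ (s : S) (x' : X), act s x = some x'

/-- The stabilizer of a point. -/
def stab (act : S → X → Option X) (x : X) : Set S := {s : S | act s x = some x}

/-- A morphism of `S`-actions. -/
def IsMorphism (actX : S → X → Option X) (actY : S → Y → Option Y) (α : X → Y) : Prop :=
  ∀ (s : S) (x x' : X), actX s x = some x' → actY s (α x) = some (α x')

/-- A strong morphism of `S`-actions. -/
def IsStrongMorphism (actX : S → X → Option X) (actY : S → Y → Option Y)
    (α : X → Y) : Prop :=
  IsMorphism actX actY α ∧
    ∀ (s : S) (x : X) (y' : Y), actY s (α x) = some y' → ∃ x' : X, actX s x = some x'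

end Defs

section Helpers
variable {S : Type*} [Semigroup S] {inv : S → S}

lemma idem_mul_inv (hS : IsInvSgp S inv) (a : S) : (a * inv a) * (a * inv a) = a * inv a := by
  have := hS.mul_inv_mul a
  calc (a * inv a) * (a * inv a) = (a * inv a * a) * inv a := by simp [mul_assoc]
  _ = a * inv a := by rw [this]

lemma idem_inv_mul (hS : IsInvSgp S inv) (a : S) : (inv a * a) * (inv a * a) = inv a * a := by
  have := hS.inv_mul_inv a
  calc (inv a * a) * (inv a * a) = (inv a * a * inv a) * a := by rw [mul_assoc, mul_assoc, mul_assoc]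
  _ = inv a * a := by rw [this]

lemma sandwich (hS : IsInvSgp S inv) {e : S} (he : e * e = e) (k : S) :
    ∃ g : S, g * g = g ∧ e * k * e = g * k := by
  set f := k * e * inv k with hf
  have hc : e * (inv k * k) = (inv k * k) * e := hS.idem_comm _ _ he (idem_inv_mul hS k)
  have hke : f * k = k * e := by
    calc f * k = k * (e * (inv k * k)) := by simp [hf, mul_assoc]
    _ = k * ((inv k * k) * e) := by rw [hc]
    _ = (k * inv k * k) * e := by simp [mul_assoc]
    _ = k * e := by rw [hS.mul_inv_mul]
  have hfi : f * f = f := by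
    calc f * f = k * (e * (inv k * k)) * (e * inv k) := by simp [hf, mul_assoc]
    _ = k * ((inv k * k) * e) * (e * inv k) := by rw [hc]
    _ = k * (inv k * k) * (e * (e * inv k)) := by simp [mul_assoc]
    _ = k * (inv k * k) * (e * inv k) := by rw [← mul_assoc e e, he]
    _ = k * ((inv k * k) * e) * inv k := by simp [mul_assoc]
    _ = k * (e * (inv k * k)) * inv k := by rw [hc]
    _ = (k * e) * ((inv k * k) * inv k) := by simp [mul_assoc]
    _ = (k * e) * inv k := by rw [show (inv k * k) * inv k = inv k from by
          have := hS.inv_mul_inv k; simpa [mul_assoc] using this]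
    _ = f := rfl
  refine ⟨e * f, ?_, ?_⟩
  · have hef : e * f = f * e := hS.idem_comm _ _ he hfi
    calc e * f * (e * f) = e * (f * e) * f := by rw [← mul_assoc, mul_assoc e f e]
    _ = e * (e * f) * f := by rw [← hef]
    _ = (e * e) * (f * f) := by rw [← mul_assoc e e f, mul_assoc (e*e) f f]
    _ = e * f := by rw [he, hfi]
  · calc e * k * e = e * (k * e) := by rw [mul_assoc]
    _ = e * (f * k) := by rw [hke]
    _ = e * f * k := by rw [← mul_assoc]

lemma nle_refl (hS : IsInvSgp S inv) (a : S) : nle a a :=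
  ⟨a * inv a, idem_mul_inv hS a, (hS.mul_inv_mul a).symm⟩

end Helpers

/-- `H` and `K` are conjugate via `s` iff the upward closures of the
conjugated sets are exactly `K` and `H`. -/
theorem stmt2 {S : Type*} [Semigroup S] (inv : S → S) (hS : IsInvSgp S inv)
    (H K : Set S) (hH : IsClosedInvSub inv H) (hK : IsClosedInvSub inv K) (s : S) :
    ({x : S | ∃ h ∈ H, x = s * h * inv s} ⊆ K ∧
      {x : S | ∃ k ∈ K, x = inv s * k * s} ⊆ H) ↔
    (up {x : S | ∃ h ∈ H, x = s * h * inv s} = K ∧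
      up {x : S | ∃ k ∈ K, x = inv s * k * s} = H) := by
  constructor
  · rintro ⟨h1, h2⟩
    constructor
    · apply Set.Subset.antisymm
      · intro x hx
        obtain ⟨a, haA, hax⟩ := hx
        have : x ∈ up K := ⟨a, h1 haA, hax⟩
        rwa [hK.2.2] at this
      · intro k hk
        have hmem : inv s * k * s ∈ H := h2 ⟨k, hk, rfl⟩
        refine ⟨s * (inv s * k * s) * inv s, ⟨_, hmem, rfl⟩, ?_⟩
        obtain ⟨g, hg, heq⟩ := sandwich hS (idem_mul_inv hS s) k
        refine ⟨g, hg, ?_⟩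
        rw [← heq]; simp [mul_assoc]
    · apply Set.Subset.antisymm
      · intro x hx
        obtain ⟨a, haA, hax⟩ := hx
        have : x ∈ up H := ⟨a, h2 haA, hax⟩
        rwa [hH.2.2] at this
      · intro h hh
        have hmem : s * h * inv s ∈ K := h1 ⟨h, hh, rfl⟩
        refine ⟨inv s * (s * h * inv s) * s, ⟨_, hmem, rfl⟩, ?_⟩
        obtain ⟨g, hg, heq⟩ := sandwich hS (idem_inv_mul hS s) h
        refine ⟨g, hg, ?_⟩
        rw [← heq]; simp [mul_assoc]
  · rintro ⟨h1, h2⟩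
    constructor
    · intro x hx
      rw [← h1]
      exact ⟨x, hx, nle_refl hS x⟩
    · intro x hx
      rw [← h2]
      exact ⟨x, hx, nle_refl hS x⟩


end InvSgpPaper
end

section
/- Let S be an inverse semigroup, let F be a filter in E(S), and let F̄ = {s ∈ S : for all f ∈ F, inv(s)·f·s ∈ F and s·f·inv(s) ∈ F}. If T is any closed inverse subsemigroup of S whose set of idempotents is F, then T ⊆ F̄. -/
namespace InvSgpPaper

/-- Any closed inverse subsemigroup whose set of idempotents is the
filter `F` is contained in `F̄`. -/
theorem stmt4 {S : Type*} [Semigroup S] (inv : S → S) (hS : IsInvSgp S inv)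
    (F : Set S) (hF : IsFilterE F) (T : Set S)
    (hT : IsClosedInvSub inv T) (hTE : idemSet T = F) :
    T ⊆ fbar inv F := by
  obtain ⟨hmul, hinvT, _⟩ := hT
  intro t ht f hf
  have hfT : f ∈ T := by rw [← hTE] at hf; exact hf.1
  have hff : f * f = f := hF.2.1 f hf
  have he1 : (t * inv t) * (t * inv t) = t * inv t := by
    have := hS.mul_inv_mul t
    calc (t * inv t) * (t * inv t) = (t * inv t * t) * inv t := by
          simp only [mul_assoc]
      _ = t * inv t := by rw [this]
  have he2 : (inv t * t) * (inv t * t) = inv t * t := by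
    have := hS.inv_mul_inv t
    calc (inv t * t) * (inv t * t) = (inv t * t * inv t) * t := by
          simp only [mul_assoc]
      _ = inv t * t := by rw [this]
  have h1 : inv t * f * t ∈ T := hmul _ (hmul _ (hinvT t ht) _ hfT) _ ht
  have h2 : t * f * inv t ∈ T := hmul _ (hmul _ ht _ hfT) _ (hinvT t ht)
  have hi1 : (inv t * f * t) * (inv t * f * t) = inv t * f * t := by
    have comm : f * (t * inv t) = (t * inv t) * f := hS.idem_comm f _ hff he1
    calc (inv t * f * t) * (inv t * f * t)
        = inv t * (f * (t * inv t)) * (f * t) := by simp only [mul_assoc]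
      _ = inv t * ((t * inv t) * f) * (f * t) := by rw [comm]
      _ = (inv t * t * inv t) * (f * f) * t := by simp only [mul_assoc]
      _ = inv t * f * t := by rw [hS.inv_mul_inv, hff]
  have hi2 : (t * f * inv t) * (t * f * inv t) = t * f * inv t := by
    have comm : f * (inv t * t) = (inv t * t) * f := hS.idem_comm f _ hff he2
    calc (t * f * inv t) * (t * f * inv t)
        = t * (f * (inv t * t)) * (f * inv t) := by simp only [mul_assoc]
      _ = t * ((inv t * t) * f) * (f * inv t) := by rw [comm]
      _ = (t * inv t * t) * (f * f) * inv t := by simp only [mul_assoc]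
      _ = t * f * inv t := by rw [hS.mul_inv_mul, hff]
  constructor
  · rw [← hTE]; exact ⟨h1, hi1⟩
  · rw [← hTE]; exact ⟨h2, hi2⟩

end InvSgpPaper
end

section
/- Let S be an inverse semigroup acting transitively on sets X and Y, let x ∈ X and y ∈ Y, and let S_x and S_y be the stabilizers of x and y. Then there exists a morphism α : X → Y of S-actions with α(x) = y if and only if S_x ⊆ S_y; moreover any two morphisms from X to Y sending x to y are equal. -/
namespace InvSgpPaper

section Aux

variable {S X Y : Type*} [Semigroup S]

lemma idem_invs_s (inv : S → S) (hS : IsInvSgp S inv) (s : S) :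
    (inv s * s) * (inv s * s) = inv s * s := by
  rw [mul_assoc, ← mul_assoc s, hS.mul_inv_mul]

lemma idem_s_invs (inv : S → S) (hS : IsInvSgp S inv) (s : S) :
    (s * inv s) * (s * inv s) = s * inv s := by
  rw [mul_assoc, ← mul_assoc (inv s), hS.inv_mul_inv]

/-- If `s` maps `x` to `x'`, then `inv s * s` stabilizes `x` and `inv s` maps `x'` back to `x`. -/
lemma aux_L1 (inv : S → S) (hS : IsInvSgp S inv) {actX : S → X → Option X}
    (hX : IsAction actX) {s : S} {x x' : X} (h : actX s x = some x') :
    actX (inv s * s) x = some x ∧ actX (inv s) x' = some x := by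
  have hs : s * (inv s * s) = s := by rw [← mul_assoc, hS.mul_inv_mul]
  have h2 := hX.2 s (inv s * s) x
  rw [hs, h] at h2
  cases he : actX (inv s * s) x with
  | none => rw [he] at h2; simp at h2
  | some z =>
    have hz := hX.1 _ (idem_invs_s inv hS s) x z he
    rw [hz] at he
    refine ⟨congrArg some hz, ?_⟩
    have h3 := hX.2 (inv s) s x
    rw [he, h] at h3
    simpa using h3.symm

/-- If `s` maps `x` somewhere and stabilizers are included, then `s` is defined at `y`,
with `inv s` mapping the value back to `y`. -/
lemma aux_L2 (inv : S → S) (hS : IsInvSgp S inv) {actX : S → X → Option X}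
    {actY : S → Y → Option Y} (hX : IsAction actX) (hY : IsAction actY)
    {x : X} {y : Y} (hsub : stab actX x ⊆ stab actY y)
    {s : S} {x' : X} (h : actX s x = some x') :
    ∃ y', actY s y = some y' ∧ actY (inv s) y' = some y := by
  have hst : (inv s * s) ∈ stab actX x := (aux_L1 inv hS hX h).1
  have hy : actY (inv s * s) y = some y := hsub hst
  have h2 := hY.2 (inv s) s y
  rw [hy] at h2
  cases he : actY s y with
  | none => rw [he] at h2; simp at h2
  | some y' =>
    rw [he] at h2
    exact ⟨y', rfl, by simpa using h2.symm⟩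

/-- Two elements mapping `x` to the same point act equally on `y`. -/
lemma aux_L3 (inv : S → S) (hS : IsInvSgp S inv) {actX : S → X → Option X}
    {actY : S → Y → Option Y} (hX : IsAction actX) (hY : IsAction actY)
    {x : X} {y : Y} (hsub : stab actX x ⊆ stab actY y)
    {s t : S} {x' : X} (hs : actX s x = some x') (ht : actX t x = some x') :
    actY s y = actY t y := by
  obtain ⟨y₁, hy₁, _⟩ := aux_L2 inv hS hX hY hsub hs
  obtain ⟨y₂, hy₂, _⟩ := aux_L2 inv hS hX hY hsub ht
  -- inv t * s stabilizes x
  have htx : actX (inv t) x' = some x := (aux_L1 inv hS hX ht).2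
  have hcomp := hX.2 (inv t) s x
  rw [hs] at hcomp
  simp only [Option.bind_some] at hcomp
  rw [htx] at hcomp
  have hsty : actY (inv t * s) y = some y := hsub hcomp
  have hc2 := hY.2 (inv t) s y
  rw [hsty, hy₁] at hc2
  simp only [Option.bind_some] at hc2
  -- hc2 : some y = actY (inv t) y₁
  have hc3 := hY.2 t (inv t) y₁
  rw [← hc2] at hc3
  simp only [Option.bind_some] at hc3
  rw [hy₂] at hc3
  -- hc3 : actY (t * inv t) y₁ = some y₂
  have := hY.1 _ (idem_s_invs inv hS t) y₁ y₂ hc3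
  rw [hy₁, hy₂, this]

end Aux

/-- There is a (unique) morphism of transitive `S`-actions sending
`x` to `y` iff `S_x ⊆ S_y`. -/
theorem stmt8 {S X Y : Type*} [Semigroup S] (inv : S → S) (hS : IsInvSgp S inv)
    (actX : S → X → Option X) (actY : S → Y → Option Y)
    (hX : IsAction actX) (hY : IsAction actY)
    (hXt : IsTransitiveAct actX) (hYt : IsTransitiveAct actY)
    (x : X) (y : Y) :
    ((∃ α : X → Y, IsMorphism actX actY α ∧ α x = y) ↔ stab actX x ⊆ stab actY y) ∧
    (∀ α β : X → Y, IsMorphism actX actY α → IsMorphism actX actY β →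
      α x = y → β x = y → α = β) := by
  constructor
  · constructor
    · rintro ⟨α, hα, hαx⟩ s hs
      have := hα s x x hs
      rwa [hαx] at this
    · intro hsub
      classical
      refine ⟨fun x' => (actY (Classical.choose (hXt x x')) y).getD y, ?_, ?_⟩
      · intro s x₁ x₂ h
        set t₁ := Classical.choose (hXt x x₁) with ht₁def
        have ht₁ : actX t₁ x = some x₁ := Classical.choose_spec (hXt x x₁)
        set t₂ := Classical.choose (hXt x x₂) with ht₂def
        have ht₂ : actX t₂ x = some x₂ := Classical.choose_spec (hXt x x₂)
        obtain ⟨y₁, hy₁, _⟩ := aux_L2 inv hS hX hY hsub ht₁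
        obtain ⟨y₂, hy₂, _⟩ := aux_L2 inv hS hX hY hsub ht₂
        have hcomp : actX (s * t₁) x = some x₂ := by
          have := hX.2 s t₁ x
          rw [ht₁] at this
          simpa [h] using this
        have hagree := aux_L3 inv hS hX hY hsub hcomp ht₂
        have hexp := hY.2 s t₁ y
        rw [hy₁, hagree, hy₂] at hexp
        simp only [Option.bind_some] at hexp
        show actY s ((actY t₁ y).getD y) = some ((actY t₂ y).getD y)
        simp only [hy₁, hy₂, Option.getD_some]
        exact hexp.symm
      · have ht₀ : actX (Classical.choose (hXt x x)) x = some x :=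
          Classical.choose_spec (hXt x x)
        have : actY (Classical.choose (hXt x x)) y = some y := hsub ht₀
        simp only [this, Option.getD_some]
  · intro α β hα hβ hαx hβx
    funext x'
    obtain ⟨s, hs⟩ := hXt x x'
    have h₁ := hα s x x' hs
    have h₂ := hβ s x x' hs
    rw [hαx] at h₁
    rw [hβx] at h₂
    rw [h₁] at h₂
    exact Option.some_injective _ h₂

end InvSgpPaper
end

section
/- Let S be an inverse semigroup acting transitively on sets X and Y. Then every strong morphism α : X → Y of S-actions is surjective. -/
namespace InvSgpPaper

/-- A strong morphism between transitive (effective) `S`-actions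
is surjective. -/
theorem stmt10 {S X Y : Type*} [Semigroup S] [Nonempty X]
    (inv : S → S) (hS : IsInvSgp S inv)
    (actX : S → X → Option X) (actY : S → Y → Option Y)
    (hX : IsAction actX) (hY : IsAction actY)
    (hXe : IsEffectiveAct actX) (hYe : IsEffectiveAct actY)
    (hXt : IsTransitiveAct actX) (hYt : IsTransitiveAct actY)
    (α : X → Y) (hα : IsStrongMorphism actX actY α) :
    Function.Surjective α := by
  intro y
  obtain ⟨x₀⟩ := ‹Nonempty X›
  obtain ⟨s, hs⟩ := hYt (α x₀) y
  obtain ⟨x', hx'⟩ := hα.2 s x₀ y hs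
  have := hα.1 s x₀ x' hx'
  exact ⟨x', by rw [this] at hs; exact Option.some.inj hs⟩

end InvSgpPaper
end

section
/- Let S be an inverse semigroup acting transitively on sets X and Y, and suppose both actions are universal, i.e., for every point x the stabilizer S_x equals (E(S_x))↑, the upward closure in S of its own set of idempotents. Then every strong morphism α : X → Y of S-actions is a bijection. -/
namespace InvSgpPaper

/-- A strong morphism between universal transitive `S`-actions is
a bijection. -/
theorem stmt11 {S X Y : Type*} [Semigroup S] [Nonempty X]
    (inv : S → S) (hS : IsInvSgp S inv)
    (actX : S → X → Option X) (actY : S → Y → Option Y)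
    (hX : IsAction actX) (hY : IsAction actY)
    (hXt : IsTransitiveAct actX) (hYt : IsTransitiveAct actY)
    (hXu : ∀ x : X, stab actX x = up (idemSet (stab actX x)))
    (hYu : ∀ y : Y, stab actY y = up (idemSet (stab actY y)))
    (α : X → Y) (hα : IsStrongMorphism actX actY α) :
    Function.Bijective α := by
  constructor
  · intro x1 x2 h
    obtain ⟨s, hs⟩ := hXt x1 x2
    have hsY : actY s (α x1) = some (α x2) := hα.1 s x1 x2 hs
    rw [← h] at hsY
    have hmem : s ∈ up (idemSet (stab actY (α x1))) := by
      rw [← hYu]; exact hsY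
    obtain ⟨f, ⟨hfstab, hfid⟩, e, he, hfe⟩ := hmem
    obtain ⟨x', hx'⟩ := hα.2 f x1 (α x1) hfstab
    have hx'eq : x' = x1 := hX.1 f hfid x1 x' hx'
    rw [hx'eq] at hx'
    have h2 : actX (e * s) x1 = actX e x2 := by
      rw [hX.2 e s x1, hs]; rfl
    rw [← hfe, hx'] at h2
    exact hX.1 e he x2 x1 h2.symm
  · intro y
    obtain ⟨x0⟩ := ‹Nonempty X›
    obtain ⟨s, hs⟩ := hYt (α x0) y
    obtain ⟨x', hx'⟩ := hα.2 s x0 y hs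
    have h2 := hα.1 s x0 x' hx'
    rw [hs] at h2
    exact ⟨x', (Option.some_injective _ h2).symm⟩

end InvSgpPaper
end

section
/- Let S be an inverse semigroup and let T be a closed inverse subsemigroup of S. Then T is directed if and only if there exists a filter F in E(S) such that T = F↑. -/
namespace InvSgpPaper

lemma aux_idem_mul {S : Type*} [Semigroup S] {inv : S → S} (hS : IsInvSgp S inv) {e f : S}
    (he : e * e = e) (hf : f * f = f) : (e * f) * (e * f) = e * f := by
  have h := hS.idem_comm f e hf he
  calc (e * f) * (e * f) = e * (f * e) * f := by simp [mul_assoc]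
    _ = e * (e * f) * f := by rw [h]
    _ = (e * e) * (f * f) := by simp [mul_assoc]
    _ = e * f := by rw [he, hf]

lemma aux_nle_trans {S : Type*} [Semigroup S] {inv : S → S} (hS : IsInvSgp S inv) {a b c : S}
    (h1 : nle a b) (h2 : nle b c) : nle a c := by
  obtain ⟨p, hp, hab⟩ := h1
  obtain ⟨q, hq, hbc⟩ := h2
  exact ⟨p * q, aux_idem_mul hS hp hq, by rw [hab, hbc, mul_assoc]⟩

/-- A closed inverse subsemigroup `T` is directed iff `T = F↑` for
some filter `F` in `E(S)`. -/
theorem stmt14 {S : Type*} [Semigroup S] (inv : S → S) (hS : IsInvSgp S inv)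
    (T : Set S) (hT : IsClosedInvSub inv T) :
    IsDirectedSet T ↔ ∃ F : Set S, IsFilterE F ∧ T = up F := by
  obtain ⟨hTmul, hTinv, hTup⟩ := hT
  constructor
  · rintro ⟨⟨a0, ha0⟩, hdir⟩
    refine ⟨idemSet T, ⟨?_, ?_, ?_, ?_⟩, ?_⟩
    · -- nonempty
      refine ⟨a0 * inv a0, hTmul a0 ha0 (inv a0) (hTinv a0 ha0), ?_⟩
      calc (a0 * inv a0) * (a0 * inv a0) = (a0 * inv a0 * a0) * inv a0 := by
            simp [mul_assoc]
        _ = a0 * inv a0 := by rw [hS.mul_inv_mul]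
    · exact fun e he => he.2
    · exact fun e he f hf =>
        ⟨hTmul e he.1 f hf.1, aux_idem_mul hS he.2 hf.2⟩
    · intro e he f hf hef
      have : f ∈ up T := ⟨e, he.1, hef⟩
      rw [hTup] at this
      exact ⟨this, hf⟩
    · ext s
      constructor
      · intro hs
        have hss : s * inv s ∈ T := hTmul s hs (inv s) (hTinv s hs)
        obtain ⟨c, hcT, hcs, hcss⟩ := hdir s hs (s * inv s) hss
        obtain ⟨m, hm, hcm⟩ := hcss
        have hssidem : (s * inv s) * (s * inv s) = s * inv s := by
          calc (s * inv s) * (s * inv s) = (s * inv s * s) * inv s := by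
                simp [mul_assoc]
            _ = s * inv s := by rw [hS.mul_inv_mul]
        have hcidem : c * c = c := by
          rw [hcm]; exact aux_idem_mul hS hm hssidem
        exact ⟨c, ⟨hcT, hcidem⟩, hcs⟩
      · rintro ⟨e, ⟨heT, _⟩, hes⟩
        have : s ∈ up T := ⟨e, heT, hes⟩
        rwa [hTup] at this
  · rintro ⟨F, ⟨⟨e0, he0⟩, hFidem, hFmul, hFup⟩, hTF⟩
    have memT : ∀ e ∈ F, e ∈ T := by
      intro e he
      rw [hTF]
      exact ⟨e, he, e, hFidem e he, (hFidem e he).symm⟩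
    constructor
    · exact ⟨e0, memT e0 he0⟩
    · intro a ha b hb
      rw [hTF] at ha hb
      obtain ⟨e, heF, hea⟩ := ha
      obtain ⟨f, hfF, hfb⟩ := hb
      refine ⟨e * f, memT _ (hFmul e heF f hfF), ?_, ?_⟩
      · exact aux_nle_trans hS ⟨f, hFidem f hfF, hS.idem_comm e f (hFidem e heF) (hFidem f hfF)⟩ hea
      · exact aux_nle_trans hS ⟨e, hFidem e heF, rfl⟩ hfb

end InvSgpPaper
end

section
/- Let k be a field and let V be a k-vector space of finite dimension n. Let M be a set of k-linear endomorphisms of V that is closed under composition, consists of idempotent endomorphisms, and whose elements pairwise commute (i.e., M is a semilattice in End_k(V)). Then M has at most 2^n elements. -/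
namespace InvSgpPaper

open Module in
theorem aux0 : ∀ (n : ℕ) {k V : Type*} [Field k] [AddCommGroup V] [Module k V]
    [FiniteDimensional k V], Module.finrank k V = n →
    ∀ (M : Set (Module.End k V)),
    (∀ f ∈ M, ∀ g ∈ M, f * g ∈ M) →
    (∀ f ∈ M, f * f = f) →
    (∀ f ∈ M, ∀ g ∈ M, f * g = g * f) →
    M.Finite ∧ M.ncard ≤ 2 ^ n := by
  intro n
  induction n using Nat.strong_induction_on with
  | _ n ih =>
    intro k V _ _ _ _ hn M hmul hidem hcomm
    classical
    by_cases htr : ∀ p ∈ M, p = 0 ∨ p = 1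
    · have hsub : M ⊆ {0, 1} := fun p hp => by rcases htr p hp with h | h <;> simp [h]
      have hfin : M.Finite := (Set.finite_singleton (1 : Module.End k V)).insert 0 |>.subset hsub
      refine ⟨hfin, ?_⟩
      rcases Nat.eq_zero_or_pos n with rfl | hn1
      · have hV : Subsingleton V := Module.finrank_zero_iff.mp hn
        have hS : M.Subsingleton := fun a _ b _ => Subsingleton.elim a b
        have : M.ncard ≤ 1 := by
          rw [Set.ncard_le_one_iff_eq]
          rcases Set.eq_empty_or_nonempty M with h | ⟨x, hx⟩
          · exact Or.inl h
          · exact Or.inr ⟨x, Set.eq_singleton_iff_unique_mem.mpr ⟨hx, fun y hy => hS hy hx⟩⟩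
        simpa using this
      · calc M.ncard ≤ ({0, 1} : Set (Module.End k V)).ncard :=
              Set.ncard_le_ncard hsub ((Set.finite_singleton _).insert _)
          _ ≤ 2 := (Set.ncard_insert_le _ _).trans (by simp [Set.ncard_singleton])
          _ ≤ 2 ^ n := by
              calc (2:ℕ) = 2 ^ 1 := rfl
                _ ≤ 2 ^ n := Nat.pow_le_pow_right (by norm_num) hn1
    · push_neg at htr
      obtain ⟨p, hp, hp0, hp1⟩ := htr
      set U : Submodule k V := LinearMap.range p with hU
      set W : Submodule k V := LinearMap.ker p with hW
      -- invariance
      have hinvU : ∀ q ∈ M, ∀ v ∈ U, q v ∈ U := by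
        rintro q hq v ⟨w, rfl⟩
        exact ⟨q w, by have := DFunLike.congr_fun (hcomm p hp q hq) w
                       simpa [Module.End.mul_apply] using this⟩
      have hinvW : ∀ q ∈ M, ∀ v ∈ W, q v ∈ W := by
        intro q hq v hv
        have hv' : p v = 0 := hv
        have := DFunLike.congr_fun (hcomm p hp q hq) v
        simp only [Module.End.mul_apply] at this
        show p (q v) = 0
        rw [this, hv', map_zero]
      -- restriction maps
      let rU : Module.End k V → Module.End k U := fun q =>
        if h : ∀ v ∈ U, q v ∈ U then q.restrict h else 0
      let rW : Module.End k V → Module.End k W := fun q =>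
        if h : ∀ v ∈ W, q v ∈ W then q.restrict h else 0
      have rU_apply : ∀ q ∈ M, ∀ x : U, ((rU q x : U) : V) = q x := by
        intro q hq x
        simp only [rU, dif_pos (hinvU q hq)]
        rfl
      have rW_apply : ∀ q ∈ M, ∀ x : W, ((rW q x : W) : V) = q x := by
        intro q hq x
        simp only [rW, dif_pos (hinvW q hq)]
        rfl
      have rU_mul : ∀ q ∈ M, ∀ q' ∈ M, rU (q * q') = rU q * rU q' := by
        intro q hq q' hq'
        ext x
        show ((rU (q * q') x : U) : V) = (((rU q * rU q') x : U) : V)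
        rw [Module.End.mul_apply, rU_apply q hq ((rU q') x), rU_apply q' hq' x,
          rU_apply _ (hmul q hq q' hq') x, Module.End.mul_apply]
      have rW_mul : ∀ q ∈ M, ∀ q' ∈ M, rW (q * q') = rW q * rW q' := by
        intro q hq q' hq'
        ext x
        show ((rW (q * q') x : W) : V) = (((rW q * rW q') x : W) : V)
        rw [Module.End.mul_apply, rW_apply q hq ((rW q') x), rW_apply q' hq' x,
          rW_apply _ (hmul q hq q' hq') x, Module.End.mul_apply]
      -- restricted sets
      set MU : Set (Module.End k U) := rU '' M with hMU
      set MW : Set (Module.End k W) := rW '' M with hMW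
      have hmulU : ∀ f ∈ MU, ∀ g ∈ MU, f * g ∈ MU := by
        rintro _ ⟨q, hq, rfl⟩ _ ⟨q', hq', rfl⟩
        exact ⟨q * q', hmul q hq q' hq', rU_mul q hq q' hq'⟩
      have hidemU : ∀ f ∈ MU, f * f = f := by
        rintro _ ⟨q, hq, rfl⟩
        rw [← rU_mul q hq q hq, hidem q hq]
      have hcommU : ∀ f ∈ MU, ∀ g ∈ MU, f * g = g * f := by
        rintro _ ⟨q, hq, rfl⟩ _ ⟨q', hq', rfl⟩
        rw [← rU_mul q hq q' hq', ← rU_mul q' hq' q hq, hcomm q hq q' hq']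
      have hmulW : ∀ f ∈ MW, ∀ g ∈ MW, f * g ∈ MW := by
        rintro _ ⟨q, hq, rfl⟩ _ ⟨q', hq', rfl⟩
        exact ⟨q * q', hmul q hq q' hq', rW_mul q hq q' hq'⟩
      have hidemW : ∀ f ∈ MW, f * f = f := by
        rintro _ ⟨q, hq, rfl⟩
        rw [← rW_mul q hq q hq, hidem q hq]
      have hcommW : ∀ f ∈ MW, ∀ g ∈ MW, f * g = g * f := by
        rintro _ ⟨q, hq, rfl⟩ _ ⟨q', hq', rfl⟩
        rw [← rW_mul q hq q' hq', ← rW_mul q' hq' q hq, hcomm q hq q' hq']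
      -- dimensions
      have hpp : ∀ v, p (p v) = p v := by
        intro v
        have := DFunLike.congr_fun (hidem p hp) v
        simpa [Module.End.mul_apply] using this
      have hdim : finrank k U + finrank k W = n := by
        rw [hU, hW, LinearMap.finrank_range_add_finrank_ker, hn]
      have hWpos : 0 < finrank k W := by
        rcases Nat.eq_zero_or_pos (finrank k W) with h | h
        · exfalso
          apply hp1
          have hker : LinearMap.ker p = ⊥ := Submodule.finrank_eq_zero.mp h
          have hinj : Function.Injective p := LinearMap.ker_eq_bot.mp hker
          ext v
          exact hinj (hpp v)
        · exact h
      have hUpos : 0 < finrank k U := by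
        rcases Nat.eq_zero_or_pos (finrank k U) with h | h
        · exfalso
          exact hp0 (LinearMap.range_eq_bot.mp (Submodule.finrank_eq_zero.mp h))
        · exact h
      have hUlt : finrank k U < n := by omega
      have hWlt : finrank k W < n := by omega
      obtain ⟨finU, cardU⟩ := ih _ hUlt rfl MU hmulU hidemU hcommU
      obtain ⟨finW, cardW⟩ := ih _ hWlt rfl MW hmulW hidemW hcommW
      -- injectivity
      have hInj : Set.InjOn (fun q => (rU q, rW q)) M := by
        intro q hq q' hq' h
        simp only [Prod.mk.injEq] at h
        ext v
        have hsplit : v = p v + (v - p v) := by abel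
        have hmemU : p v ∈ U := ⟨v, rfl⟩
        have hmemW : v - p v ∈ W := by
          show p (v - p v) = 0
          rw [map_sub, hpp, sub_self]
        have e1 : q (p v) = q' (p v) := by
          have h1 : rU q ⟨p v, hmemU⟩ = rU q' ⟨p v, hmemU⟩ := by rw [h.1]
          have h2 := congrArg (Subtype.val) h1
          rwa [rU_apply q hq ⟨p v, hmemU⟩, rU_apply q' hq' ⟨p v, hmemU⟩] at h2
        have e2 : q (v - p v) = q' (v - p v) := by
          have h1 : rW q ⟨v - p v, hmemW⟩ = rW q' ⟨v - p v, hmemW⟩ := by rw [h.2]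
          have h2 := congrArg (Subtype.val) h1
          rwa [rW_apply q hq ⟨v - p v, hmemW⟩, rW_apply q' hq' ⟨v - p v, hmemW⟩] at h2
        calc q v = q (p v + (v - p v)) := by rw [← hsplit]
          _ = q (p v) + q (v - p v) := map_add _ _ _
          _ = q' (p v) + q' (v - p v) := by rw [e1, e2]
          _ = q' (p v + (v - p v)) := (map_add _ _ _).symm
          _ = q' v := by rw [← hsplit]
      have himg : (fun q => (rU q, rW q)) '' M ⊆ MU ×ˢ MW := by
        rintro _ ⟨q, hq, rfl⟩
        exact ⟨⟨q, hq, rfl⟩, ⟨q, hq, rfl⟩⟩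
      have hfinprod : (MU ×ˢ MW).Finite := finU.prod finW
      have hfinM : M.Finite := by
        have : ((fun q => (rU q, rW q)) '' M).Finite := hfinprod.subset himg
        exact Set.Finite.of_finite_image this hInj
      refine ⟨hfinM, ?_⟩
      have hprodcard : (MU ×ˢ MW).ncard = MU.ncard * MW.ncard := by
        rw [← Nat.card_coe_set_eq, ← Nat.card_coe_set_eq, ← Nat.card_coe_set_eq,
          Nat.card_congr (Equiv.Set.prod MU MW), Nat.card_prod]
      calc M.ncard = ((fun q => (rU q, rW q)) '' M).ncard :=
            (Set.ncard_image_of_injOn hInj).symm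
        _ ≤ (MU ×ˢ MW).ncard := Set.ncard_le_ncard himg hfinprod
        _ = MU.ncard * MW.ncard := hprodcard
        _ ≤ 2 ^ finrank k U * 2 ^ finrank k W := Nat.mul_le_mul cardU cardW
        _ = 2 ^ n := by rw [← pow_add, hdim]

/-- A semilattice of idempotent, pairwise commuting linear
endomorphisms of an `n`-dimensional vector space has at most `2 ^ n` elements. -/
theorem stmt19 {k V : Type*} [Field k] [AddCommGroup V] [Module k V]
    [FiniteDimensional k V] (n : ℕ) (hn : Module.finrank k V = n)
    (M : Set (Module.End k V))
    (hmul : ∀ f ∈ M, ∀ g ∈ M, f * g ∈ M)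
    (hidem : ∀ f ∈ M, f * f = f)
    (hcomm : ∀ f ∈ M, ∀ g ∈ M, f * g = g * f) :
    M.Finite ∧ M.ncard ≤ 2 ^ n :=
  aux0 n hn M hmul hidem hcomm

end InvSgpPaper
end
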